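/- Fix λ > 0, μ > 0, c₁ ∈ (0,1), and α, γ ∈ (0,1) with α + γ ≤ 1 and α + γ > 0. Define q₁(i,j) = (Γ(1+1/c₁+λ+μ)/(c₁ Γ(λ+1) Γ(μ))) · (Γ(i+λ+1)/Γ(i+1)) · (Γ(j+μ)/Γ(j+1)) / (Γ(i+j+1/c₁+λ+μ+2)/Γ(i+j+1)) and q₂(i,j) = (Γ(1+1/c₁+λ+μ)/(c₁ Γ(λ) Γ(μ+1))) · (Γ(i+λ)/Γ(i+1)) · (Γ(j+μ+1)/Γ(j+1)) / (Γ(i+j+1/c₁+λ+μ+2)/Γ(i+j+1)), and define p(i,j) = (γ/(α+γ)) q₁(i-1,j) + (α/(α+γ)) q₂(i,j-1) (with the convention that terms with a negative argument vanish). Then for all x, y > 0, lim_{n→∞} p(⌊n x⌋, ⌊n y⌋)/n^{-(2+1/c₁)} = (γ/(α+γ)) (Γ(1+1/c₁+λ+μ)/(c₁ Γ(λ+1) Γ(μ))) x^λ y^{μ-1}/(x+y)^{1+λ+μ+1/c₁} + (α/(α+γ)) (Γ(1+1/c₁+λ+μ)/(c₁ Γ(λ) Γ(μ+1))) x^{λ-1}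 y^μ/(x+y)^{1+λ+μ+1/c₁}. -/

import Mathlib

open Real Filter Topology

noncomputable def Grat (a t : ℝ) : ℝ := Real.Gamma (t + a) / (Real.Gamma t * t ^ a)

lemma aux_ratio (c : ℝ) : Tendsto (fun t : ℝ => (t + c) / t) atTop (𝓝 1) := by
  have h : Tendsto (fun t : ℝ => 1 + c * t⁻¹) atTop (𝓝 (1 + c * 0)) :=
    tendsto_const_nhds.add (tendsto_inv_atTop_zero.const_mul c)
  rw [mul_zero, add_zero] at h
  refine h.congr' ?_
  filter_upwards [eventually_gt_atTop 0] with t ht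
  field_simp

lemma Grat_unit {a : ℝ} (h0 : 0 ≤ a) (h1 : a ≤ 1) : Tendsto (Grat a) atTop (𝓝 1) := by
  rcases eq_or_lt_of_le h0 with rfl | h0'
  · refine tendsto_const_nhds.congr' ?_
    filter_upwards [eventually_gt_atTop 0] with t ht
    simp [Grat, rpow_zero, (Real.Gamma_pos_of_pos ht).ne']
  rcases eq_or_lt_of_le h1 with rfl | h1'
  · refine tendsto_const_nhds.congr' ?_
    filter_upwards [eventually_gt_atTop 0] with t ht
    have hG := Real.Gamma_pos_of_pos ht
    rw [Grat, Real.Gamma_add_one ht.ne', rpow_one]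
    field_simp
  -- now 0 < a < 1
  have hb : (0:ℝ) < 1 - a := by linarith
  have lowlim : Tendsto (fun t : ℝ => t / (t + a)) atTop (𝓝 1) := by
    have := (aux_ratio a).inv₀ one_ne_zero
    rw [inv_one] at this
    refine this.congr' ?_
    filter_upwards [eventually_gt_atTop 0] with t ht
    rw [inv_div]
  refine tendsto_of_tendsto_of_tendsto_of_le_of_le' lowlim tendsto_const_nhds ?_ ?_
  · filter_upwards [eventually_gt_atTop 0] with t ht
    have hta : 0 < t + a := by linarith
    have hG := Real.Gamma_pos_of_pos ht
    have hGa := Real.Gamma_pos_of_pos hta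
    -- lower bound: t * Γ t ≤ Γ (t+a) * (t+a)^(1-a)
    have key : t * Real.Gamma t ≤ Real.Gamma (t + a) * (t + a) ^ (1 - a) := by
      have h := Real.Gamma_mul_add_mul_le_rpow_Gamma_mul_rpow_Gamma hta
        (by linarith : (0:ℝ) < t + a + 1) h0' hb (by ring)
      have harg : a * (t + a) + (1 - a) * (t + a + 1) = t + 1 := by ring
      rw [harg, Real.Gamma_add_one ht.ne'] at h
      calc t * Real.Gamma t ≤ Real.Gamma (t+a) ^ a * Real.Gamma (t+a+1) ^ (1-a) := h
        _ = Real.Gamma (t + a) * (t + a) ^ (1 - a) := by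
            rw [show t + a + 1 = (t+a) + 1 by ring, Real.Gamma_add_one hta.ne',
              Real.mul_rpow hta.le hGa.le, ← mul_assoc, mul_comm _ ((t+a)^(1-a)),
              mul_assoc, ← Real.rpow_add hGa, add_sub_cancel, Real.rpow_one]
            ring
    -- deduce t/(t+a) ≤ Grat a t
    have hpow1 : t ^ a * (t + a) ^ (1 - a) ≤ t + a := by
      calc t ^ a * (t + a) ^ (1 - a) ≤ (t + a) ^ a * (t + a) ^ (1 - a) := by
            exact mul_le_mul_of_nonneg_right
              (Real.rpow_le_rpow ht.le (by linarith) h0'.le) (by positivity)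
        _ = t + a := by rw [← Real.rpow_add hta]; simp
    rw [Grat, div_le_div_iff₀ hta (by positivity)]
    calc t * (Real.Gamma t * t ^ a) = (t * Real.Gamma t) * t ^ a := by ring
      _ ≤ (Real.Gamma (t + a) * (t + a) ^ (1 - a)) * t ^ a :=
          mul_le_mul_of_nonneg_right key (by positivity)
      _ = Real.Gamma (t+a) * (t ^ a * (t+a) ^ (1-a)) := by ring
      _ ≤ Real.Gamma (t+a) * (t + a) := by gcongr
  · filter_upwards [eventually_gt_atTop 0] with t ht
    have hG := Real.Gamma_pos_of_pos ht
    have key : Real.Gamma (t + a) ≤ Real.Gamma t * t ^ a := by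
      have h := Real.Gamma_mul_add_mul_le_rpow_Gamma_mul_rpow_Gamma ht
        (by linarith : (0:ℝ) < t + 1) hb h0' (by ring)
      have harg : (1 - a) * t + a * (t + 1) = t + a := by ring
      rw [harg, Real.Gamma_add_one ht.ne'] at h
      calc Real.Gamma (t + a) ≤ Real.Gamma t ^ (1-a) * (t * Real.Gamma t) ^ a := h
        _ = Real.Gamma t * t ^ a := by
            rw [Real.mul_rpow ht.le hG.le, ← mul_assoc, mul_comm (Real.Gamma t ^ (1-a)),
              mul_assoc, mul_comm (Real.Gamma t ^ (1-a)), ← Real.rpow_add hG, add_sub_cancel,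
              Real.rpow_one]
            ring
    rw [Grat, div_le_one (by positivity)]
    exact key

lemma Grat_step_up {a : ℝ} (h : Tendsto (Grat a) atTop (𝓝 1)) :
    Tendsto (Grat (a + 1)) atTop (𝓝 1) := by
  have := h.mul (aux_ratio a)
  rw [mul_one] at this
  refine this.congr' ?_
  filter_upwards [eventually_gt_atTop (max 0 (-a))] with t ht
  have ht0 : 0 < t := lt_of_le_of_lt (le_max_left _ _) ht
  have hta : 0 < t + a := by
    have := lt_of_le_of_lt (le_max_right _ _) ht; linarith
  have hG := Real.Gamma_pos_of_pos ht0
  simp only [Grat]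
  rw [show t + (a + 1) = (t + a) + 1 by ring, Real.Gamma_add_one hta.ne',
    Real.rpow_add ht0, Real.rpow_one]
  field_simp

lemma Grat_step_down {a : ℝ} (h : Tendsto (Grat a) atTop (𝓝 1)) :
    Tendsto (Grat (a - 1)) atTop (𝓝 1) := by
  have hinv : Tendsto (fun t : ℝ => t / (t + (a - 1))) atTop (𝓝 1) := by
    have := (aux_ratio (a - 1)).inv₀ one_ne_zero
    rw [inv_one] at this
    refine this.congr' ?_
    filter_upwards [eventually_gt_atTop 0] with t ht
    rw [inv_div]
  have := h.mul hinv
  rw [mul_one] at this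
  refine this.congr' ?_
  filter_upwards [eventually_gt_atTop (max 0 (1 - a))] with t ht
  have ht0 : 0 < t := lt_of_le_of_lt (le_max_left _ _) ht
  have hta : 0 < t + (a - 1) := by
    have := lt_of_le_of_lt (le_max_right _ _) ht; linarith
  have hG := Real.Gamma_pos_of_pos ht0
  have hGa := Real.Gamma_pos_of_pos hta
  simp only [Grat]
  rw [show t + a = (t + (a - 1)) + 1 by ring, Real.Gamma_add_one hta.ne',
    show a = (a - 1) + 1 by ring, Real.rpow_add ht0, Real.rpow_one,
    show a - 1 + 1 - 1 = a - 1 by ring]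
  field_simp

lemma Grat_tendsto (a : ℝ) : Tendsto (Grat a) atTop (𝓝 1) := by
  have key : ∀ (k : ℕ) (b : ℝ), 0 ≤ b → b ≤ 1 →
      Tendsto (Grat (b + k)) atTop (𝓝 1) ∧ Tendsto (Grat (b - k)) atTop (𝓝 1) := by
    intro k
    induction k with
    | zero =>
      intro b h0 h1
      simp only [Nat.cast_zero, add_zero, sub_zero]
      exact ⟨Grat_unit h0 h1, Grat_unit h0 h1⟩
    | succ n ih =>
      intro b h0 h1
      obtain ⟨h₁, h₂⟩ := ih b h0 h1
      constructor
      · have := Grat_step_up h₁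
        rwa [show b + (n:ℝ) + 1 = b + (n+1 : ℕ) by push_cast; ring] at this
      · have := Grat_step_down h₂
        rwa [show b - (n:ℝ) - 1 = b - (n+1 : ℕ) by push_cast; ring] at this
  rcases le_total 0 a with ha | ha
  · have := (key ⌊a⌋₊ (a - ⌊a⌋₊) (by simpa using Nat.floor_le ha)
      (by have := Nat.lt_floor_add_one a; linarith)).1
    rwa [sub_add_cancel] at this
  · have := (key ⌈-a⌉₊ (a + ⌈-a⌉₊) (by have := Nat.le_ceil (-a); linarith)
      (by have h1 := Nat.ceil_lt_add_one (by linarith : (0:ℝ) ≤ -a); nlinarith [Nat.ceil_lt_add_one (show (0:ℝ) ≤ -a by linarith)])).2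
    rwa [add_sub_cancel_right] at this

lemma piece_eq (a b d e N A T S u uA v vT w wS : ℝ)
    (hA : 0 < A) (hT : 0 < T) (hS : 0 < S) (hN : 0 < N)
    (hAa : 0 < A + a) (hTb : 0 < T + b) (hSd : 0 < S + d)
    (hu : u = A + a) (huA : uA = A) (hv : v = T + b) (hvT : vT = T)
    (hw : w = S + d) (hwS : wS = S) (he : e = a + b - d) :
    (Real.Gamma u / Real.Gamma uA * (Real.Gamma v / Real.Gamma vT) /
      (Real.Gamma w / Real.Gamma wS)) / N ^ e
    = Grat a A * Grat b T / Grat d S *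
      ((A / N) ^ a * ((T / N) ^ b) / ((S / N) ^ d)) := by
  subst hu huA hv hvT hw hwS he
  have gA := (Real.Gamma_pos_of_pos hA).ne'
  have gT := (Real.Gamma_pos_of_pos hT).ne'
  have gS := (Real.Gamma_pos_of_pos hS).ne'
  have gAa := (Real.Gamma_pos_of_pos hAa).ne'
  have gTb := (Real.Gamma_pos_of_pos hTb).ne'
  have gSd := (Real.Gamma_pos_of_pos hSd).ne'
  have pA := (Real.rpow_pos_of_pos hA a).ne'
  have pT := (Real.rpow_pos_of_pos hT b).ne'
  have pS := (Real.rpow_pos_of_pos hS d).ne'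
  have pNa := (Real.rpow_pos_of_pos hN a).ne'
  have pNb := (Real.rpow_pos_of_pos hN b).ne'
  have pNd := (Real.rpow_pos_of_pos hN d).ne'
  rw [Grat, Grat, Grat, Real.div_rpow hA.le hN.le, Real.div_rpow hT.le hN.le,
    Real.div_rpow hS.le hN.le, Real.rpow_sub hN, Real.rpow_add hN]
  field_simp

/-- regular variation of the asymptotic joint in/out-degree pmf
`p(i,j)` in the standard case `c₁ = c₂` of the preferential attachment model:
`p(⌊n x⌋,⌊n y⌋)/n^{-(2+1/c₁)}` converges to the stated mixture limit. -/
theorem stmt_8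
    (lam mu c₁ α γ : ℝ) (hlam : 0 < lam) (hmu : 0 < mu)
    (hc₁ : c₁ ∈ Set.Ioo (0 : ℝ) 1)
    (hα : α ∈ Set.Ioo (0 : ℝ) 1) (hγ : γ ∈ Set.Ioo (0 : ℝ) 1)
    (hαγ_le : α + γ ≤ 1) (hαγ_pos : 0 < α + γ)
    (q₁ q₂ : ℕ → ℕ → ℝ)
    (hq₁ : ∀ i j : ℕ, q₁ i j =
      (Gamma (1 + 1 / c₁ + lam + mu) / (c₁ * Gamma (lam + 1) * Gamma mu)) *
        ((Gamma ((i : ℝ) + lam + 1) / Gamma ((i : ℝ) + 1)) *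
          (Gamma ((j : ℝ) + mu) / Gamma ((j : ℝ) + 1)) /
          (Gamma ((i : ℝ) + (j : ℝ) + 1 / c₁ + lam + mu + 2) /
            Gamma ((i : ℝ) + (j : ℝ) + 1))))
    (hq₂ : ∀ i j : ℕ, q₂ i j =
      (Gamma (1 + 1 / c₁ + lam + mu) / (c₁ * Gamma lam * Gamma (mu + 1))) *
        ((Gamma ((i : ℝ) + lam) / Gamma ((i : ℝ) + 1)) *
          (Gamma ((j : ℝ) + mu + 1) / Gamma ((j : ℝ) + 1)) /
          (Gamma ((i : ℝ) + (j : ℝ) + 1 / c₁ + lam + mu + 2) /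
            Gamma ((i : ℝ) + (j : ℝ) + 1))))
    (p : ℕ → ℕ → ℝ)
    (hp : ∀ i j : ℕ, p i j =
      (if i = 0 then 0 else γ / (α + γ) * q₁ (i - 1) j) +
      (if j = 0 then 0 else α / (α + γ) * q₂ i (j - 1))) :
    ∀ x y : ℝ, 0 < x → 0 < y →
      Tendsto
        (fun n : ℕ => p ⌊(n : ℝ) * x⌋₊ ⌊(n : ℝ) * y⌋₊ /
          (n : ℝ) ^ (-(2 + 1 / c₁)))
        atTop
        (𝓝 (γ / (α + γ) *
              (Gamma (1 + 1 / c₁ + lam + mu) /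
                (c₁ * Gamma (lam + 1) * Gamma mu)) *
              (x ^ lam * y ^ (mu - 1) / (x + y) ^ (1 + lam + mu + 1 / c₁)) +
            α / (α + γ) *
              (Gamma (1 + 1 / c₁ + lam + mu) /
                (c₁ * Gamma lam * Gamma (mu + 1))) *
              (x ^ (lam - 1) * y ^ mu /
                (x + y) ^ (1 + lam + mu + 1 / c₁)))) := by
  intro x y hx hy
  obtain ⟨hc0, hc1⟩ := hc₁
  have hic : 0 < 1 / c₁ := by positivity
  have hxy : 0 < x + y := by linarith
  -- floor sequences
  have hIN : Tendsto (fun n : ℕ => ⌊(n : ℝ) * x⌋₊) atTop atTop :=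
    (tendsto_nat_floor_mul_atTop x hx).congr fun n => by rw [mul_comm]
  have hJN : Tendsto (fun n : ℕ => ⌊(n : ℝ) * y⌋₊) atTop atTop :=
    (tendsto_nat_floor_mul_atTop y hy).congr fun n => by rw [mul_comm]
  have hIa : Tendsto (fun n : ℕ => ((⌊(n : ℝ) * x⌋₊ : ℕ) : ℝ)) atTop atTop :=
    tendsto_natCast_atTop_atTop.comp hIN
  have hJa : Tendsto (fun n : ℕ => ((⌊(n : ℝ) * y⌋₊ : ℕ) : ℝ)) atTop atTop :=
    tendsto_natCast_atTop_atTop.comp hJN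
  have hIdiv : Tendsto (fun n : ℕ => ((⌊(n : ℝ) * x⌋₊ : ℕ) : ℝ) / n) atTop (𝓝 x) :=
    ((tendsto_nat_floor_mul_div_atTop hx.le).comp tendsto_natCast_atTop_atTop).congr
      fun n => by rw [Function.comp_apply, mul_comm]
  have hJdiv : Tendsto (fun n : ℕ => ((⌊(n : ℝ) * y⌋₊ : ℕ) : ℝ) / n) atTop (𝓝 y) :=
    ((tendsto_nat_floor_mul_div_atTop hy.le).comp tendsto_natCast_atTop_atTop).congr
      fun n => by rw [Function.comp_apply, mul_comm]
  have hone : Tendsto (fun n : ℕ => 1 / (n : ℝ)) atTop (𝓝 0) :=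
    tendsto_one_div_atTop_nhds_zero_nat
  have hI1div : Tendsto (fun n : ℕ => (((⌊(n : ℝ) * x⌋₊ : ℕ) : ℝ) + 1) / n) atTop (𝓝 x) := by
    have h := hIdiv.add hone
    rw [add_zero] at h
    exact h.congr fun n => (add_div _ _ _).symm
  have hJ1div : Tendsto (fun n : ℕ => (((⌊(n : ℝ) * y⌋₊ : ℕ) : ℝ) + 1) / n) atTop (𝓝 y) := by
    have h := hJdiv.add hone
    rw [add_zero] at h
    exact h.congr fun n => (add_div _ _ _).symm
  have hSdiv : Tendsto (fun n : ℕ =>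
      (((⌊(n : ℝ) * x⌋₊ : ℕ) : ℝ) + ((⌊(n : ℝ) * y⌋₊ : ℕ) : ℝ)) / n) atTop (𝓝 (x + y)) :=
    (hIdiv.add hJdiv).congr fun n => (add_div _ _ _).symm
  -- Gamma-ratio limits
  have g1 := (Grat_tendsto lam).comp hIa
  have g2 := (Grat_tendsto (mu - 1)).comp (tendsto_atTop_add_const_right atTop (1 : ℝ) hJa)
  have g3 := (Grat_tendsto (1 + lam + mu + 1 / c₁)).comp (hIa.atTop_add_atTop hJa)
  have g4 := (Grat_tendsto (lam - 1)).comp (tendsto_atTop_add_const_right atTop (1 : ℝ) hIa)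
  have g5 := (Grat_tendsto mu).comp hJa
  -- power limits
  have p1 := hIdiv.rpow_const (p := lam) (Or.inl hx.ne')
  have p2 := hJ1div.rpow_const (p := mu - 1) (Or.inl hy.ne')
  have p3 := hSdiv.rpow_const (p := 1 + lam + mu + 1 / c₁) (Or.inl hxy.ne')
  have p4 := hI1div.rpow_const (p := lam - 1) (Or.inl hx.ne')
  have p5 := hJdiv.rpow_const (p := mu) (Or.inl hy.ne')
  have pne : (x + y) ^ (1 + lam + mu + 1 / c₁) ≠ 0 := (Real.rpow_pos_of_pos hxy _).ne'
  have hprod1 := ((g1.mul g2).div g3 one_ne_zero).mul ((p1.mul p2).div p3 pne)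
  have hprod2 := ((g4.mul g5).div g3 one_ne_zero).mul ((p4.mul p5).div p3 pne)
  have built : Tendsto (fun n : ℕ =>
      γ / (α + γ) * ((Gamma (1 + 1 / c₁ + lam + mu) / (c₁ * Gamma (lam + 1) * Gamma mu)) *
        (Grat lam ((⌊(n : ℝ) * x⌋₊ : ℕ) : ℝ) *
            Grat (mu - 1) (((⌊(n : ℝ) * y⌋₊ : ℕ) : ℝ) + 1) /
            Grat (1 + lam + mu + 1 / c₁)
              (((⌊(n : ℝ) * x⌋₊ : ℕ) : ℝ) + ((⌊(n : ℝ) * y⌋₊ : ℕ) : ℝ)) *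
          ((((⌊(n : ℝ) * x⌋₊ : ℕ) : ℝ) / n) ^ lam *
              ((((⌊(n : ℝ) * y⌋₊ : ℕ) : ℝ) + 1) / n) ^ (mu - 1) /
              (((((⌊(n : ℝ) * x⌋₊ : ℕ) : ℝ) + ((⌊(n : ℝ) * y⌋₊ : ℕ) : ℝ)) / n) ^
                (1 + lam + mu + 1 / c₁))))) +
      α / (α + γ) * ((Gamma (1 + 1 / c₁ + lam + mu) / (c₁ * Gamma lam * Gamma (mu + 1))) *
        (Grat (lam - 1) (((⌊(n : ℝ) * x⌋₊ : ℕ) : ℝ) + 1) *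
            Grat mu ((⌊(n : ℝ) * y⌋₊ : ℕ) : ℝ) /
            Grat (1 + lam + mu + 1 / c₁)
              (((⌊(n : ℝ) * x⌋₊ : ℕ) : ℝ) + ((⌊(n : ℝ) * y⌋₊ : ℕ) : ℝ)) *
          (((((⌊(n : ℝ) * x⌋₊ : ℕ) : ℝ) + 1) / n) ^ (lam - 1) *
              ((((⌊(n : ℝ) * y⌋₊ : ℕ) : ℝ)) / n) ^ mu /
              (((((⌊(n : ℝ) * x⌋₊ : ℕ) : ℝ) + ((⌊(n : ℝ) * y⌋₊ : ℕ) : ℝ)) / n) ^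
                (1 + lam + mu + 1 / c₁))))))
      atTop
      (𝓝 (γ / (α + γ) * ((Gamma (1 + 1 / c₁ + lam + mu) / (c₁ * Gamma (lam + 1) * Gamma mu)) *
            (1 * 1 / 1 * (x ^ lam * y ^ (mu - 1) / (x + y) ^ (1 + lam + mu + 1 / c₁)))) +
          α / (α + γ) * ((Gamma (1 + 1 / c₁ + lam + mu) / (c₁ * Gamma lam * Gamma (mu + 1))) *
            (1 * 1 / 1 * (x ^ (lam - 1) * y ^ mu / (x + y) ^ (1 + lam + mu + 1 / c₁)))))) :=
    (tendsto_const_nhds.mul (tendsto_const_nhds.mul hprod1)).add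
      (tendsto_const_nhds.mul (tendsto_const_nhds.mul hprod2))
  rw [show (γ / (α + γ) * ((Gamma (1 + 1 / c₁ + lam + mu) / (c₁ * Gamma (lam + 1) * Gamma mu)) *
            (1 * 1 / 1 * (x ^ lam * y ^ (mu - 1) / (x + y) ^ (1 + lam + mu + 1 / c₁)))) +
          α / (α + γ) * ((Gamma (1 + 1 / c₁ + lam + mu) / (c₁ * Gamma lam * Gamma (mu + 1))) *
            (1 * 1 / 1 * (x ^ (lam - 1) * y ^ mu / (x + y) ^ (1 + lam + mu + 1 / c₁)))))
      = (γ / (α + γ) * (Gamma (1 + 1 / c₁ + lam + mu) / (c₁ * Gamma (lam + 1) * Gamma mu)) *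
              (x ^ lam * y ^ (mu - 1) / (x + y) ^ (1 + lam + mu + 1 / c₁)) +
            α / (α + γ) * (Gamma (1 + 1 / c₁ + lam + mu) / (c₁ * Gamma lam * Gamma (mu + 1))) *
              (x ^ (lam - 1) * y ^ mu / (x + y) ^ (1 + lam + mu + 1 / c₁)))
      from by ring] at built
  refine Tendsto.congr' ?_ built
  have comb : ∀ c1 C X c2 D Y w : ℝ,
      c1 * (C * X) / w + c2 * (D * Y) / w = c1 * (C * (X / w)) + c2 * (D * (Y / w)) :=
    fun c1 C X c2 D Y w => by ring
  filter_upwards [hIN.eventually_ge_atTop 1, hJN.eventually_ge_atTop 1,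
    eventually_ge_atTop 1] with n hi hj hn
  have hA1 : (1 : ℝ) ≤ ((⌊(n : ℝ) * x⌋₊ : ℕ) : ℝ) := by exact_mod_cast hi
  have hB1 : (1 : ℝ) ≤ ((⌊(n : ℝ) * y⌋₊ : ℕ) : ℝ) := by exact_mod_cast hj
  have hN1 : (1 : ℝ) ≤ (n : ℝ) := by exact_mod_cast hn
  have hN0 : (0 : ℝ) < n := by linarith
  rw [hp, if_neg (by omega), if_neg (by omega), hq₁, hq₂,
    Nat.cast_sub hi, Nat.cast_sub hj, Nat.cast_one]
  set A := ((⌊(n : ℝ) * x⌋₊ : ℕ) : ℝ) with hAdef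
  set B := ((⌊(n : ℝ) * y⌋₊ : ℕ) : ℝ) with hBdef
  have e1 := piece_eq lam (mu - 1) (1 + lam + mu + 1 / c₁) (-(2 + 1 / c₁)) (n : ℝ)
    A (B + 1) (A + B) (A - 1 + lam + 1) (A - 1 + 1) (B + mu) (B + 1)
    (A - 1 + B + 1 / c₁ + lam + mu + 2) (A - 1 + B + 1)
    (by linarith) (by linarith) (by linarith) hN0
    (by linarith) (by linarith) (by linarith)
    (by ring) (by ring) (by ring) rfl (by ring) (by ring) (by ring)
  have e2 := piece_eq (lam - 1) mu (1 + lam + mu + 1 / c₁) (-(2 + 1 / c₁)) (n : ℝ)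
    (A + 1) B (A + B) (A + lam) (A + 1) (B - 1 + mu + 1) (B - 1 + 1)
    (A + (B - 1) + 1 / c₁ + lam + mu + 2) (A + (B - 1) + 1)
    (by linarith) (by linarith) (by linarith) hN0
    (by linarith) (by linarith) (by linarith)
    (by ring) rfl (by ring) (by ring) (by ring) (by ring) (by ring)
  conv_rhs => rw [add_div, comb, e1, e2]
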